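/- Let z_n ∈ H, λ_n > 0, w_n = P_C(z_n − λ_n F(z_n)), z_{n+1} = w_n + λ_n(F(z_n) − F(w_n)), and let x* ∈ C satisfy ⟨F(w_n), w_n − x*⟩ ≥ 0. Then ‖z_{n+1} − x*‖² ≤ ‖z_n − x*‖² − ‖w_n − z_n‖² + λ_n²‖F(w_n) − F(z_n)‖². -/
import Mathlib


open scoped RealInnerProductSpace

/-- One-step inequality of Tseng's extragradient method: with
`w_n = P_C (z_n - λ_n F z_n)` (characterized by the variational inequality of the
projection), `z_{n+1} = w_n + λ_n (F z_n - F w_n)`, and `x* ∈ C` with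
`⟪F w_n, w_n - x*⟫ ≥ 0`, one has
`‖z_{n+1} - x*‖² ≤ ‖z_n - x*‖² - ‖w_n - z_n‖² + λ_n² ‖F w_n - F z_n‖²`. -/
theorem stmt_15 {H : Type*} [NormedAddCommGroup H] [InnerProductSpace ℝ H] [CompleteSpace H]
    (C : Set H) (hCne : C.Nonempty) (hCc : IsClosed C) (hC : Convex ℝ C)
    (F : H → H) (zn wn zn1 x : H) (lam : ℝ) (hlam : 0 < lam)
    (hwn : wn ∈ C)
    (hwnproj : ∀ u ∈ C, ⟪zn - lam • F zn - wn, u - wn⟫ ≤ 0)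
    (hzn1 : zn1 = wn + lam • (F zn - F wn))
    (hx : x ∈ C) (hxineq : 0 ≤ ⟪F wn, wn - x⟫) :
    ‖zn1 - x‖ ^ 2 ≤ ‖zn - x‖ ^ 2 - ‖wn - zn‖ ^ 2 + lam ^ 2 * ‖F wn - F zn‖ ^ 2 := by
  subst hzn1
  have h1 : ⟪wn - zn + lam • F zn, wn - x⟫ ≤ 0 := by
    have h := hwnproj x hx
    rw [show wn - zn + lam • F zn = -(zn - lam • F zn - wn) by abel,
      show wn - x = -(x - wn) by abel, inner_neg_neg]
    exact h
  have h1' : ⟪wn - zn, wn - x⟫ + lam * ⟪F zn, wn - x⟫ ≤ 0 := by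
    rwa [inner_add_left, real_inner_smul_left] at h1
  have e1 : ‖wn + lam • (F zn - F wn) - x‖ ^ 2
      = ‖wn - x‖ ^ 2 + 2 * (lam * ⟪wn - x, F zn - F wn⟫)
        + lam ^ 2 * ‖F zn - F wn‖ ^ 2 := by
    rw [show wn + lam • (F zn - F wn) - x = (wn - x) + lam • (F zn - F wn) by abel,
      norm_add_sq_real, real_inner_smul_right, norm_smul]
    simp [mul_pow, sq_abs]
  have e2 : ‖wn - x‖ ^ 2 = ‖wn - zn‖ ^ 2 + 2 * ⟪wn - zn, zn - x⟫ + ‖zn - x‖ ^ 2 := by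
    rw [show wn - x = (wn - zn) + (zn - x) by abel, norm_add_sq_real]
  have e3 : ⟪wn - zn, wn - x⟫ = ‖wn - zn‖ ^ 2 + ⟪wn - zn, zn - x⟫ := by
    rw [show wn - x = (wn - zn) + (zn - x) by abel, inner_add_right,
      real_inner_self_eq_norm_sq]
  have e4 : ⟪wn - x, F zn - F wn⟫ = ⟪F zn, wn - x⟫ - ⟪F wn, wn - x⟫ := by
    rw [inner_sub_right, real_inner_comm (wn - x), real_inner_comm (wn - x)]
  have e5 : ‖F zn - F wn‖ = ‖F wn - F zn‖ := by rw [← norm_neg]; congr 1; abel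
  rw [e1, e2, e4, e5]
  nlinarith [hlam.le, mul_nonneg hlam.le hxineq]
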